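/- Let λ ∈ ∂𝔻 be an irrational rotation, let φ ∈ H^∞(𝔻), and let T = R_λ φ(B) on H²(𝔻). If there exist z₀ ∈ 𝔻 and a subsequence (n_k) of positive integers such that Ψ_{n_k}(z₀) → 0, then there is a dense subset X₀ of H²(𝔻) such that T^{n_k} x → 0 for every x ∈ X₀ (that is, T satisfies condition X₀ of the Hypercyclicity Criterion along (n_k)). -/

import Mathlib

open Complex Metric Filter Topology ComplexConjugate

noncomputable section

/-- The Hardy space `H²(𝔻)`, modeled via Taylor coefficients as the sequence space `ℓ²`:
an analytic function `f(z) = Σ aₙ zⁿ` on the unit disk with `Σ |aₙ|² < ∞` is identified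
with its coefficient sequence. -/
abbrev H2 := lp (fun _ : ℕ => ℂ) 2

/-- The analytic function on the unit disk represented by an element of `H²`. -/
def H2.toFun (f : H2) (z : ℂ) : ℂ := ∑' n : ℕ, f n * z ^ n

/-- `B` is the backward shift `(Bf)(z) = (f(z) - f(0))/z`, i.e. on Taylor coefficients
`(Bf)ₙ = f_{n+1}`. -/
def IsBackwardShift (B : H2 →L[ℂ] H2) : Prop :=
  ∀ (f : H2) (n : ℕ), B f n = f (n + 1)

/-- `R` is the dilation operator `(R_λ f)(z) = f(λ z)`, i.e. on Taylor coefficients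
`(R_λ f)ₙ = λⁿ fₙ`. -/
def IsDilation (lam : ℂ) (R : H2 →L[ℂ] H2) : Prop :=
  ∀ (f : H2) (n : ℕ), R f n = lam ^ n * f n

/-- `φ ∈ H^∞(𝔻)`: a bounded analytic function on the open unit disk. -/
def InHinf (φ : ℂ → ℂ) : Prop :=
  DifferentiableOn ℂ φ (ball (0:ℂ) 1) ∧ ∃ M : ℝ, ∀ z ∈ ball (0:ℂ) 1, ‖φ z‖ ≤ M

/-- `Φ = φ(B)`, the coanalytic Toeplitz operator `M_{φ̄}⋆` with symbol `φ`: there is a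
Taylor coefficient sequence `c` for `φ` on the disk such that
`(Φ f)ₙ = Σ_k c_k f_{n+k}` (equivalently `Φ = Σ_k c_k B^k`). -/
def IsCoToeplitz (φ : ℂ → ℂ) (Φ : H2 →L[ℂ] H2) : Prop :=
  ∃ c : ℕ → ℂ,
    (∀ z ∈ ball (0:ℂ) 1, HasSum (fun k => c k * z ^ k) (φ z)) ∧
    (∀ (f : H2) (n : ℕ), HasSum (fun k => c k * f (n + k)) (Φ f n))

/-- An operator `T` is hypercyclic if some vector has dense orbit `{Tⁿ x : n ∈ ℕ}`. -/
def Hypercyclic (T : H2 →L[ℂ] H2) : Prop :=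
  ∃ x : H2, Dense (Set.range fun n : ℕ => (T ^ n) x)

/-- An operator `T` is supercyclic if for some vector `x` the set of scalar multiples
`{μ Tⁿ x : μ ∈ ℂ, n ∈ ℕ}` is dense. -/
def Supercyclic (T : H2 →L[ℂ] H2) : Prop :=
  ∃ x : H2, Dense {y : H2 | ∃ (μ : ℂ) (n : ℕ), y = μ • (T ^ n) x}

/-- `φ̄(z) = conj (φ (conj z))`. -/
def conjSymb (φ : ℂ → ℂ) (z : ℂ) : ℂ := conj (φ (conj z))

/-- `λ` is an irrational rotation: `|λ| = 1` and `λ` is not a root of unity. -/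
def IsIrrationalRotation (lam : ℂ) : Prop :=
  ‖lam‖ = 1 ∧ ∀ n : ℕ, 0 < n → lam ^ n ≠ 1

/-- `Ψ_n(z) = φ̄(z)·φ̄(αz)⋯φ̄(α^{n-1}z)` where `α = conj λ`. -/
def psiProd (φ : ℂ → ℂ) (lam : ℂ) (n : ℕ) (z : ℂ) : ℂ :=
  ∏ j ∈ Finset.range n, conjSymb φ ((conj lam) ^ j * z)

/-- `Ω_n(z) = φ̄(ωz)·φ̄(ω²z)⋯φ̄(ωⁿz)` where `ω = 1/conj λ`. -/
def omegaProd (φ : ℂ → ℂ) (lam : ℂ) (n : ℕ) (z : ℂ) : ℂ :=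
  ∏ j ∈ Finset.range n, conjSymb φ (((conj lam)⁻¹) ^ (j + 1) * z)

lemma memℓp_geom {a : ℂ} (ha : ‖a‖ < 1) : Memℓp (fun n : ℕ => (conj a) ^ n) 2 := by
  apply memℓp_gen
  have hs : Summable fun n : ℕ => (‖a‖ ^ 2) ^ n :=
    summable_geometric_of_lt_one (by positivity) (by nlinarith [norm_nonneg a])
  refine hs.congr fun n => ?_
  rw [norm_pow]
  simp only [RCLike.norm_conj]
  rw [ENNReal.toReal_ofNat, Real.rpow_two]
  ring

/-- The reproducing kernel `k_a(z) = 1/(1 - conj(a) z) = Σ (conj a)ⁿ zⁿ` of `H²(𝔻)`,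
as an element of `H²` (junk value `0` if `a` is outside the unit disk). -/
def kernelVec (a : ℂ) : H2 :=
  if ha : ‖a‖ < 1 then ⟨fun n => (conj a) ^ n, memℓp_geom ha⟩ else 0

/-- `T` satisfies the Hypercyclicity Criterion for the sequence `(n_k)`. -/
def SatisfiesHCCriterion (T : H2 →L[ℂ] H2) (nk : ℕ → ℕ) : Prop :=
  ∃ (X₀ Y₀ : Set H2) (S : ℕ → H2 → H2),
    Dense X₀ ∧ Dense Y₀ ∧
    (∀ x ∈ X₀, Tendsto (fun k => (T ^ nk k) x) atTop (𝓝 0)) ∧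
    (∀ y ∈ Y₀, Tendsto (fun k => S k y) atTop (𝓝 0)) ∧
    (∀ y ∈ Y₀, Tendsto (fun k => (T ^ nk k) (S k y)) atTop (𝓝 y))

/-- A family `F` of functions is normal at `z₀`: on some open neighborhood of `z₀`,
every (sub)sequence of the family has a locally uniformly convergent subsequence. -/
def NormalAt (F : ℕ → ℂ → ℂ) (z₀ : ℂ) : Prop :=
  ∃ U : Set ℂ, IsOpen U ∧ z₀ ∈ U ∧
    ∀ g : ℕ → ℕ, StrictMono g →
      ∃ (h : ℕ → ℕ) (f : ℂ → ℂ), StrictMono h ∧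
        TendstoLocallyUniformlyOn (fun j => F (g (h j))) f atTop U

/-- The family `{F n : n ≥ 1}` is uniformly bounded on compact subsets of the unit disk. -/
def UnifBddOnCompacts (F : ℕ → ℂ → ℂ) : Prop :=
  ∀ K : Set ℂ, K ⊆ ball (0:ℂ) 1 → IsCompact K →
    ∃ M : ℝ, ∀ n : ℕ, 1 ≤ n → ∀ z ∈ K, ‖F n z‖ ≤ M



/-! ### Auxiliary lemmas for the proof -/

lemma kernelVec_apply {a : ℂ} (ha : ‖a‖ < 1) (n : ℕ) :
    (kernelVec a) n = (conj a) ^ n := by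
  unfold kernelVec
  rw [dif_pos ha]

lemma norm_kernelVec_eq {a b : ℂ} (ha : ‖a‖ < 1) (hb : ‖b‖ < 1) (hab : ‖a‖ = ‖b‖) :
    ‖kernelVec a‖ = ‖kernelVec b‖ := by
  have h2 : (0:ℝ) < (2 : ENNReal).toReal := by norm_num
  rw [lp.norm_eq_tsum_rpow h2, lp.norm_eq_tsum_rpow h2]
  congr 1
  refine tsum_congr fun n => ?_
  rw [kernelVec_apply ha, kernelVec_apply hb]
  simp [norm_pow, hab]

lemma lp_smul_apply (c : ℂ) (f : H2) (n : ℕ) : (c • f) n = c * f n := by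
  rw [lp.coeFn_smul]
  rfl

lemma phi_kernel {φ : ℂ → ℂ} {Φ : H2 →L[ℂ] H2} (hΦ : IsCoToeplitz φ Φ)
    {a : ℂ} (ha : ‖a‖ < 1) :
    Φ (kernelVec a) = φ (conj a) • kernelVec a := by
  obtain ⟨c, hc1, hc2⟩ := hΦ
  apply lp.ext; funext n
  have hmem : (conj a : ℂ) ∈ ball (0:ℂ) 1 := by
    rw [mem_ball_zero_iff]
    simpa using ha
  have h1 : HasSum (fun k => c k * (conj a)^k) (φ (conj a)) := hc1 _ hmem
  have h2 : HasSum (fun k => (conj a)^n * (c k * (conj a)^k)) ((conj a)^n * φ (conj a)) :=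
    h1.mul_left _
  have h3 : HasSum (fun k => c k * (kernelVec a) (n + k)) (Φ (kernelVec a) n) :=
    hc2 (kernelVec a) n
  have hfun : (fun k => c k * (kernelVec a) (n + k))
      = fun k => (conj a)^n * (c k * (conj a)^k) := by
    funext k
    rw [kernelVec_apply ha, pow_add]
    ring
  rw [hfun] at h3
  have := h3.unique h2
  rw [this, lp_smul_apply, kernelVec_apply ha]
  ring

lemma R_kernel {lam : ℂ} (hlam1 : ‖lam‖ = 1) {R : H2 →L[ℂ] H2} (hR : IsDilation lam R)
    {a : ℂ} (ha : ‖a‖ < 1) :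
    R (kernelVec a) = kernelVec (conj lam * a) := by
  have hb : ‖conj lam * a‖ < 1 := by
    rw [norm_mul, RCLike.norm_conj, hlam1, one_mul]; exact ha
  apply lp.ext; funext n
  rw [hR (kernelVec a) n, kernelVec_apply ha, kernelVec_apply hb]
  rw [map_mul, Complex.conj_conj, mul_pow]

lemma psiProd_succ (φ : ℂ → ℂ) (lam : ℂ) (n : ℕ) (a : ℂ) :
    psiProd φ lam (n + 1) a = psiProd φ lam n (conj lam * a) * conjSymb φ a := by
  unfold psiProd
  rw [Finset.prod_range_succ']
  congr 1
  · refine Finset.prod_congr rfl fun k _ => ?_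
    congr 1
    rw [pow_succ]
    ring
  · rw [pow_zero, one_mul]

lemma psiProd_add (φ : ℂ → ℂ) (lam : ℂ) (m n : ℕ) (z : ℂ) :
    psiProd φ lam (m + n) z = psiProd φ lam m z * psiProd φ lam n ((conj lam)^m * z) := by
  unfold psiProd
  rw [Finset.prod_range_add]
  congr 1
  refine Finset.prod_congr rfl fun k _ => ?_
  congr 1
  rw [pow_add]
  ring

lemma T_pow_kernel {lam : ℂ} (hlam1 : ‖lam‖ = 1) {φ : ℂ → ℂ}
    {R Φ T : H2 →L[ℂ] H2} (hR : IsDilation lam R) (hΦ : IsCoToeplitz φ Φ)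
    (hT : T = R ∘L Φ) :
    ∀ (n : ℕ) {a : ℂ}, ‖a‖ < 1 →
      (T ^ n) (kernelVec a) = (conj (psiProd φ lam n a)) • kernelVec ((conj lam)^n * a) := by
  intro n
  induction n with
  | zero =>
      intro a ha
      simp [psiProd]
  | succ n ih =>
      intro a ha
      have hαa : ‖conj lam * a‖ < 1 := by
        rw [norm_mul, RCLike.norm_conj, hlam1, one_mul]; exact ha
      have hTa : T (kernelVec a) = φ (conj a) • kernelVec (conj lam * a) := by
        rw [hT, ContinuousLinearMap.comp_apply, phi_kernel hΦ ha, map_smul,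
          R_kernel hlam1 hR ha]
      rw [pow_succ, ContinuousLinearMap.mul_apply, hTa, map_smul, ih hαa, smul_smul]
      have harg : (conj lam)^n * (conj lam * a) = (conj lam)^(n+1) * a := by
        rw [pow_succ]; ring
      rw [harg]
      congr 1
      rw [psiProd_succ, map_mul]
      have : conj (conjSymb φ a) = φ (conj a) := by
        unfold conjSymb
        rw [Complex.conj_conj]
      rw [this]
      ring

lemma tendsto_T_pow_kernel {lam : ℂ} (hlam1 : ‖lam‖ = 1) {φ : ℂ → ℂ}
    {R Φ T : H2 →L[ℂ] H2} (hR : IsDilation lam R) (hΦ : IsCoToeplitz φ Φ)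
    (hT : T = R ∘L Φ) (nk : ℕ → ℕ) {a : ℂ} (ha : ‖a‖ < 1)
    (h : Tendsto (fun k => ‖psiProd φ lam (nk k) a‖) atTop (𝓝 0)) :
    Tendsto (fun k => (T ^ nk k) (kernelVec a)) atTop (𝓝 0) := by
  rw [tendsto_zero_iff_norm_tendsto_zero]
  have heq : ∀ k : ℕ, ‖(T ^ nk k) (kernelVec a)‖
      = ‖psiProd φ lam (nk k) a‖ * ‖kernelVec a‖ := by
    intro k
    have hb : ‖(conj lam)^(nk k) * a‖ = ‖a‖ := by
      rw [norm_mul, norm_pow, RCLike.norm_conj, hlam1, one_pow, one_mul]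
    have hb1 : ‖(conj lam)^(nk k) * a‖ < 1 := by rw [hb]; exact ha
    rw [T_pow_kernel hlam1 hR hΦ hT (nk k) ha, norm_smul, RCLike.norm_conj,
      norm_kernelVec_eq hb1 ha hb]
  have h2 : Tendsto (fun k => ‖psiProd φ lam (nk k) a‖ * ‖kernelVec a‖) atTop (𝓝 0) := by
    have := h.mul_const ‖kernelVec a‖
    rwa [zero_mul] at this
  exact h2.congr fun k => (heq k).symm

lemma dense_span_kernelVec (a : ℕ → ℂ) (r : ℝ) (hr : r < 1)
    (hnorm : ∀ m, ‖a m‖ ≤ r) (hinj : Function.Injective a) :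
    Dense (↑(Submodule.span ℂ (Set.range fun m => kernelVec (a m))) : Set H2) := by
  rw [Submodule.dense_iff_topologicalClosure_eq_top, Submodule.topologicalClosure_eq_top_iff,
    Submodule.eq_bot_iff]
  intro f hf
  have hball : ∀ m, ‖a m‖ < 1 := fun m => lt_of_le_of_lt (hnorm m) hr
  -- the function represented by f vanishes at each a m
  have horth : ∀ m, H2.toFun f (a m) = 0 := by
    intro m
    have h0 : (inner ℂ (kernelVec (a m)) f : ℂ) = 0 :=
      (Submodule.mem_orthogonal _ f).1 hf _ (Submodule.subset_span ⟨m, rfl⟩)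
    rw [lp.inner_eq_tsum] at h0
    have : H2.toFun f (a m) = ∑' n, (inner ℂ ((kernelVec (a m)) n) (f n) : ℂ) := by
      refine tsum_congr fun n => ?_
      rw [RCLike.inner_apply, kernelVec_apply (hball m), map_pow, Complex.conj_conj]
    rw [this]
    exact h0
  -- f as a power series
  set p : FormalMultilinearSeries ℂ ℂ ℂ :=
    fun n => ContinuousMultilinearMap.mkPiRing ℂ (Fin n) (f n) with hpdef
  have hrad : (1 : ENNReal) ≤ p.radius := by
    have := p.le_radius_of_bound ‖f‖ (r := 1) (fun n => by
      rw [hpdef]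
      simp only [ContinuousMultilinearMap.norm_mkPiRing, NNReal.coe_one, one_pow, mul_one]
      exact lp.norm_apply_le_norm (by norm_num) f n)
    simpa using this
  have hps : HasFPowerSeriesOnBall (H2.toFun f) p 0 1 := by
    refine ⟨hrad, zero_lt_one, ?_⟩
    intro y hy
    have hy1 : ‖y‖ < 1 := by
      rw [mem_emetric_ball_zero_iff, enorm_eq_nnnorm] at hy
      exact_mod_cast hy
    have hsummable : Summable (fun n => f n * y ^ n) := by
      apply Summable.of_norm
      refine Summable.of_nonneg_of_le (fun n => norm_nonneg _) (fun n => ?_)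
        ((summable_geometric_of_lt_one (norm_nonneg y) hy1).mul_left ‖f‖)
      rw [norm_mul, norm_pow]
      exact mul_le_mul_of_nonneg_right (lp.norm_apply_le_norm (by norm_num) f n)
        (pow_nonneg (norm_nonneg y) n)
    have h2 : HasSum (fun n => f n * y ^ n) (H2.toFun f y) := hsummable.hasSum
    rw [zero_add]
    refine h2.congr_fun fun n => ?_
    rw [hpdef]
    simp [ContinuousMultilinearMap.mkPiRing_apply, smul_eq_mul, mul_comm]
  -- find an accumulation point of the points a m
  have hmemcb : ∀ m, a m ∈ closedBall (0:ℂ) r := fun m => by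
    rw [mem_closedBall_zero_iff]; exact hnorm m
  obtain ⟨astar, hastar, g, hg, hcg⟩ :=
    (isCompact_closedBall (0:ℂ) r).tendsto_subseq hmemcb
  have hastar1 : ‖astar‖ < 1 :=
    lt_of_le_of_lt (mem_closedBall_zero_iff.1 hastar) hr
  have hastarmem : astar ∈ Metric.eball (0:ℂ) 1 := by
    rw [mem_emetric_ball_zero_iff, enorm_eq_nnnorm]
    exact_mod_cast hastar1
  -- f vanishes frequently near astar
  have hev : ∀ᶠ k in atTop, a (g k) ≠ astar := by
    by_cases hex : ∃ k0, a (g k0) = astar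
    · obtain ⟨k0, hk0⟩ := hex
      filter_upwards [eventually_gt_atTop k0] with k hk
      intro h
      have : g k = g k0 := hinj (h.trans hk0.symm)
      exact absurd (hg.injective this) (Nat.ne_of_gt hk)
    · push_neg at hex
      exact Eventually.of_forall hex
  have ht : Tendsto (fun k => a (g k)) atTop (𝓝[≠] astar) := by
    rw [tendsto_nhdsWithin_iff]
    exact ⟨hcg, hev.mono fun k hk => hk⟩
  have hfreq : ∃ᶠ z in 𝓝[≠] astar, H2.toFun f z = 0 :=
    ht.frequently (Eventually.frequently (Eventually.of_forall fun k => horth (g k)))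
  -- so f represents the zero function near 0
  have hconn : IsPreconnected (Metric.eball (0:ℂ) 1) := by
    rw [← ENNReal.ofReal_one, emetric_ball]
    exact (convex_ball (0:ℂ) 1).isPreconnected
  have hzero : Set.EqOn (H2.toFun f) 0 (Metric.eball (0:ℂ) 1) :=
    (hps.analyticOnNhd).eqOn_zero_of_preconnected_of_frequently_eq_zero hconn hastarmem hfreq
  have hev0 : H2.toFun f =ᶠ[𝓝 (0:ℂ)] 0 := by
    have hmem : Metric.eball (0:ℂ) 1 ∈ 𝓝 (0:ℂ) :=
      Metric.isOpen_eball.mem_nhds (by simp)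
    filter_upwards [hmem] with z hz using hzero hz
  have hp0 : p = 0 := hps.hasFPowerSeriesAt.eq_zero_of_eventually hev0
  -- extract: all coefficients vanish
  apply lp.ext; funext n
  have h1 : f n = p n (fun _ => (1:ℂ)) := by
    rw [hpdef]
    simp [ContinuousMultilinearMap.mkPiRing_apply]
  have h2 : p n = 0 := by rw [hp0]; rfl
  have : f n = 0 := by rw [h1, h2]; simp
  simpa using this

/-- Packaging lemma: a sequence of kernel vectors on which the orbit tends to zero
yields the dense set `X₀`. -/
lemma exists_X0 {lam : ℂ} (hlam1 : ‖lam‖ = 1) {φ : ℂ → ℂ}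
    {R Φ T : H2 →L[ℂ] H2} (hR : IsDilation lam R) (hΦ : IsCoToeplitz φ Φ)
    (hT : T = R ∘L Φ) (nk : ℕ → ℕ)
    (a : ℕ → ℂ) (r : ℝ) (hr : r < 1) (hnorm : ∀ m, ‖a m‖ ≤ r)
    (hinj : Function.Injective a)
    (htend : ∀ m, Tendsto (fun k => ‖psiProd φ lam (nk k) (a m)‖) atTop (𝓝 0)) :
    ∃ X₀ : Set H2, Dense X₀ ∧
      ∀ x ∈ X₀, Tendsto (fun k => (T ^ nk k) x) atTop (𝓝 0) := by
  refine ⟨↑(Submodule.span ℂ (Set.range fun m => kernelVec (a m))),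
    dense_span_kernelVec a r hr hnorm hinj, ?_⟩
  intro x hx
  refine Submodule.span_induction (p := fun x _ => Tendsto (fun k => (T ^ nk k) x) atTop (𝓝 0))
    ?_ ?_ ?_ ?_ hx
  · rintro _ ⟨m, rfl⟩
    exact tendsto_T_pow_kernel hlam1 hR hΦ hT nk (lt_of_le_of_lt (hnorm m) hr) (htend m)
  · simpa using tendsto_const_nhds
  · intro u v _ _ hu hv
    have := hu.add hv
    rw [add_zero] at this
    exact this.congr fun k => (map_add _ u v).symm
  · intro c u _ hu
    have := hu.const_smul c
    rw [smul_zero] at this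
    exact this.congr fun k => (map_smul _ c u).symm

/-- Powers of a non-root-of-unity unimodular number are injective. -/
lemma pow_inj_of_irrational {lam : ℂ} (hlam : IsIrrationalRotation lam) :
    Function.Injective (fun m : ℕ => lam ^ m) := by
  obtain ⟨hlam1, hirr⟩ := hlam
  have hne : lam ≠ 0 := by
    intro h; rw [h, norm_zero] at hlam1; norm_num at hlam1
  have key : ∀ m m' : ℕ, m ≤ m' → lam ^ m = lam ^ m' → m = m' := by
    intro m m' hle h
    by_contra hne'
    have hlt : m < m' := lt_of_le_of_ne hle hne'
    have h1 : lam ^ m * lam ^ (m' - m) = lam ^ m * 1 := by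
      rw [mul_one, ← pow_add, Nat.add_sub_cancel' hle, h]
    have h2 : lam ^ (m' - m) = 1 := mul_left_cancel₀ (pow_ne_zero m hne) h1
    exact hirr (m' - m) (Nat.sub_pos_of_lt hlt) h2
  intro m m' h
  rcases le_total m m' with hle | hle
  · exact key m m' hle h
  · exact (key m' m hle h.symm).symm

theorem stmt9 (lam : ℂ) (hlam : IsIrrationalRotation lam)
    (φ : ℂ → ℂ) (hφ : InHinf φ)
    (R Φ T : H2 →L[ℂ] H2) (hR : IsDilation lam R) (hΦ : IsCoToeplitz φ Φ)
    (hT : T = R ∘L Φ)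
    (z₀ : ℂ) (hz₀ : z₀ ∈ ball (0:ℂ) 1)
    (nk : ℕ → ℕ) (hnk : StrictMono nk) (hpos : ∀ k, 0 < nk k)
    (hΨ : Tendsto (fun k => psiProd φ lam (nk k) z₀) atTop (𝓝 0)) :
    ∃ X₀ : Set H2, Dense X₀ ∧
      ∀ x ∈ X₀, Tendsto (fun k => (T ^ nk k) x) atTop (𝓝 0) := by
  have hlam1 : ‖lam‖ = 1 := hlam.1
  obtain ⟨hdiff, M, hM⟩ := hφ
  have hαnorm : ‖(conj lam : ℂ)‖ = 1 := by rw [RCLike.norm_conj]; exact hlam1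
  have hz₀1 : ‖z₀‖ < 1 := mem_ball_zero_iff.1 hz₀
  by_cases hz0 : z₀ = 0
  · -- Case `z₀ = 0` : then `|φ(0)| < 1` and `|φ| ≤ r' < 1` near `0`.
    subst hz0
    have hpsi0 : ∀ n : ℕ, psiProd φ lam n 0 = (conj (φ 0)) ^ n := by
      intro n
      unfold psiProd conjSymb
      simp [Finset.prod_const, Finset.card_range]
    have hΨn : Tendsto (fun k => ‖φ 0‖ ^ (nk k)) atTop (𝓝 0) := by
      have := hΨ.norm
      simp only [hpsi0, norm_pow, RCLike.norm_conj, norm_zero] at this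
      exact this
    have hρ : ‖φ 0‖ < 1 := by
      by_contra hge
      push_neg at hge
      obtain ⟨k, hk⟩ := (hΨn.eventually (gt_mem_nhds one_pos)).exists
      have : (1:ℝ) ≤ ‖φ 0‖ ^ (nk k) := one_le_pow₀ hge
      linarith
    set r' : ℝ := (1 + ‖φ 0‖)/2 with hr'def
    have hρr' : ‖φ 0‖ < r' := by rw [hr'def]; linarith
    have hr'1 : r' < 1 := by rw [hr'def]; linarith
    have hr'0 : (0:ℝ) ≤ r' := by rw [hr'def]; positivity
    have hc : ContinuousAt φ 0 := by
      have hopen : ball (0:ℂ) 1 ∈ 𝓝 (0:ℂ) := isOpen_ball.mem_nhds (by simp)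
      exact (hdiff.differentiableAt hopen).continuousAt
    have hevb : ∀ᶠ z in 𝓝 (0:ℂ), φ z ∈ ball (0:ℂ) r' :=
      hc.eventually_mem (isOpen_ball.mem_nhds (mem_ball_zero_iff.2 hρr'))
    obtain ⟨δ, hδ0, hδ⟩ := Metric.eventually_nhds_iff.1 hevb
    set δ' : ℝ := min (δ/2) (1/2) with hδ'def
    have hδ'0 : 0 < δ' := by rw [hδ'def]; positivity
    have hδ'δ : δ' < δ := by
      have := min_le_left (δ/2) (1/2)
      rw [hδ'def]; linarith
    have hδ'half : δ' ≤ 1/2 := min_le_right _ _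
    have hnormam : ∀ m : ℕ, ‖(((δ' / (m+2):ℝ)) : ℂ)‖ = δ' / (m+2) := by
      intro m
      rw [Complex.norm_real, Real.norm_eq_abs]
      exact abs_of_pos (by positivity)
    refine exists_X0 hlam1 hR hΦ hT nk (fun m => (((δ' / (m+2):ℝ)) : ℂ)) (1/2)
      (by norm_num) ?_ ?_ ?_
    · intro m
      rw [hnormam m]
      have h1 : δ' / (m+2) ≤ δ' := by
        apply div_le_self (le_of_lt hδ'0)
        have : (0:ℝ) ≤ (m:ℝ) := Nat.cast_nonneg m
        linarith
      linarith
    · intro m m' h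
      simp only [Complex.ofReal_inj] at h
      have hm : ((m:ℝ) + 2) ≠ 0 := by positivity
      have hm' : ((m':ℝ) + 2) ≠ 0 := by positivity
      rw [div_eq_div_iff hm hm'] at h
      have h2 : ((m':ℝ)) + 2 = (m:ℝ) + 2 := mul_left_cancel₀ (ne_of_gt hδ'0) h
      have h3 : ((m':ℝ)) = (m:ℝ) := by linarith
      exact_mod_cast h3.symm
    · intro m
      have hbound : ∀ n : ℕ, ‖psiProd φ lam n (((δ' / (m+2):ℝ)) : ℂ)‖ ≤ r' ^ n := by
        intro n
        unfold psiProd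
        rw [norm_prod]
        calc ∏ j ∈ Finset.range n, ‖conjSymb φ ((conj lam)^j * (((δ' / (m+2):ℝ)) : ℂ))‖
            ≤ ∏ _j ∈ Finset.range n, r' := by
              refine Finset.prod_le_prod (fun _ _ => norm_nonneg _) (fun j _ => ?_)
              unfold conjSymb
              rw [RCLike.norm_conj]
              have hargnorm : ‖conj ((conj lam)^j * (((δ' / (m+2):ℝ)) : ℂ))‖ < δ := by
                rw [RCLike.norm_conj, norm_mul, norm_pow, hαnorm, one_pow, one_mul,
                  hnormam m]
                have h1 : δ' / (m+2) ≤ δ' := by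
                  apply div_le_self (le_of_lt hδ'0)
                  have : (0:ℝ) ≤ (m:ℝ) := Nat.cast_nonneg m
                  linarith
                linarith
              have := hδ (show dist (conj ((conj lam)^j * (((δ' / (m+2):ℝ)) : ℂ))) 0 < δ by
                rwa [dist_zero_right])
              exact le_of_lt (mem_ball_zero_iff.1 this)
          _ = r' ^ n := by rw [Finset.prod_const, Finset.card_range]
      refine squeeze_zero (fun k => norm_nonneg _) (fun k => hbound (nk k)) ?_
      exact (tendsto_pow_atTop_nhds_zero_of_lt_one hr'0 hr'1).comp hnk.tendsto_atTop
  · -- Case `z₀ ≠ 0`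
    have hz₀ne : z₀ ≠ 0 := hz0
    have hα0 : (conj lam : ℂ) ≠ 0 := by
      intro hh
      rw [hh, norm_zero] at hαnorm; norm_num at hαnorm
    by_cases hzero : ∃ j : ℕ, conjSymb φ ((conj lam)^j * z₀) = 0
    · -- some factor vanishes along the orbit of `z₀`
      obtain ⟨j, hj⟩ := hzero
      have hal : conj lam * lam = 1 := by
        rw [mul_comm, Complex.mul_conj, Complex.normSq_eq_norm_sq, hlam1]
        norm_num
      refine exists_X0 hlam1 hR hΦ hT nk
        (fun m => (conj lam)^j * lam^(m+1) * z₀) ‖z₀‖ hz₀1 ?_ ?_ ?_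
      · intro m
        simp [norm_mul, norm_pow, hαnorm, hlam1]
      · intro m m' h
        simp only at h
        have h1 : (conj lam)^j * lam^(m+1) = (conj lam)^j * lam^(m'+1) :=
          mul_right_cancel₀ hz₀ne h
        have h2 : lam^(m+1) = lam^(m'+1) := mul_left_cancel₀ (pow_ne_zero j hα0) h1
        have h3 := pow_inj_of_irrational hlam h2
        omega
      · intro m
        have hzero' : ∀ n, m + 2 ≤ n → psiProd φ lam n ((conj lam)^j * lam^(m+1) * z₀) = 0 := by
          intro n hn
          unfold psiProd
          apply Finset.prod_eq_zero (Finset.mem_range.2 (show m+1 < n by omega))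
          have harg : (conj lam)^(m+1) * ((conj lam)^j * lam^(m+1) * z₀)
              = (conj lam)^j * z₀ := by
            calc (conj lam)^(m+1) * ((conj lam)^j * lam^(m+1) * z₀)
                = (conj lam * lam)^(m+1) * ((conj lam)^j * z₀) := by rw [mul_pow]; ring
              _ = (conj lam)^j * z₀ := by rw [hal, one_pow, one_mul]
          rw [harg]
          exact hj
        have hev : (fun k => ‖psiProd φ lam (nk k) ((conj lam)^j * lam^(m+1) * z₀)‖)
            =ᶠ[atTop] (fun _ => (0:ℝ)) := by
          filter_upwards [hnk.tendsto_atTop.eventually_ge_atTop (m+2)] with k hk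
          rw [hzero' _ hk, norm_zero]
        exact Filter.Tendsto.congr' hev.symm tendsto_const_nhds
    · -- no factor vanishes : use the orbit `α^m z₀`
      push_neg at hzero
      refine exists_X0 hlam1 hR hΦ hT nk (fun m => (conj lam)^m * z₀) ‖z₀‖ hz₀1 ?_ ?_ ?_
      · intro m
        rw [norm_mul, norm_pow, hαnorm, one_pow, one_mul]
      · intro m m' h
        simp only at h
        have h2 : (conj lam)^m = (conj lam)^m' := mul_right_cancel₀ hz₀ne h
        have h3 : lam^m = lam^m' := by
          have := congrArg conj h2
          simpa [map_pow, Complex.conj_conj] using this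
        exact pow_inj_of_irrational hlam h3
      · intro m
        have hc0 : 0 < ‖psiProd φ lam m z₀‖ := by
          rw [norm_pos_iff]
          unfold psiProd
          exact Finset.prod_ne_zero_iff.2 fun j _ => hzero j
        have hfac : ∀ (w : ℂ), ‖w‖ = ‖z₀‖ → ‖conjSymb φ w‖ ≤ max M 1 := by
          intro w hw
          unfold conjSymb
          rw [RCLike.norm_conj]
          refine le_trans (hM _ ?_) (le_max_left _ _)
          rw [mem_ball_zero_iff, RCLike.norm_conj, hw]
          exact hz₀1
        have hB : ∀ n : ℕ, ‖psiProd φ lam m ((conj lam)^n * z₀)‖ ≤ (max M 1)^m := by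
          intro n
          unfold psiProd
          rw [norm_prod]
          calc ∏ i ∈ Finset.range m, ‖conjSymb φ ((conj lam)^i * ((conj lam)^n * z₀))‖
              ≤ ∏ _i ∈ Finset.range m, max M 1 := by
                refine Finset.prod_le_prod (fun _ _ => norm_nonneg _) (fun i _ => ?_)
                apply hfac
                rw [norm_mul, norm_mul, norm_pow, norm_pow, hαnorm, one_pow, one_pow,
                  one_mul, one_mul]
            _ = (max M 1)^m := by rw [Finset.prod_const, Finset.card_range]
        have hkey : ∀ n : ℕ, ‖psiProd φ lam n ((conj lam)^m * z₀)‖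
            ≤ ‖psiProd φ lam n z₀‖ * (max M 1)^m / ‖psiProd φ lam m z₀‖ := by
          intro n
          rw [le_div_iff₀ hc0]
          have e1 : psiProd φ lam n ((conj lam)^m * z₀) * psiProd φ lam m z₀
              = psiProd φ lam n z₀ * psiProd φ lam m ((conj lam)^n * z₀) := by
            rw [mul_comm, ← psiProd_add, add_comm m n, psiProd_add]
          rw [← norm_mul, e1, norm_mul]
          exact mul_le_mul_of_nonneg_left (hB n) (norm_nonneg _)
        have htend0 : Tendsto (fun k =>
            ‖psiProd φ lam (nk k) z₀‖ * (max M 1)^m / ‖psiProd φ lam m z₀‖) atTop (𝓝 0) := by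
          have h1 : Tendsto (fun k => ‖psiProd φ lam (nk k) z₀‖) atTop (𝓝 0) := by
            simpa using hΨ.norm
          have := (h1.mul_const ((max M 1)^m)).div_const ‖psiProd φ lam m z₀‖
          simpa using this
        exact squeeze_zero (fun k => norm_nonneg _) (fun k => hkey (nk k)) htend0
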